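/- For x ∈ ℝ^d and v ∈ S^{d−1}, the un-normalized Hermite tensor satisfies He_k(x)[v^{⊗(k−1)}] = x · He_{k−1}(x·v) − (k−1) v · He_{k−2}(x·v), where He_k(x) := ((−1)^k/γ_d(x)) ∇^k γ_d(x) and He_j on the right-hand side are the univariate Hermite polynomials. -/

import Mathlib

/-- The un-normalized probabilist's Hermite polynomial `He_k` evaluated at `z`. -/
noncomputable def He (k : ℕ) (z : ℝ) : ℝ := Polynomial.aeval z (Polynomial.hermite k)

/-- The standard Gaussian density on `ℝ^d`. -/
noncomputable def gaussDensity (d : ℕ) (y : Fin d → ℝ) : ℝ :=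
  Real.exp (-(∑ i, (y i) ^ 2) / 2) / (2 * Real.pi) ^ ((d : ℝ) / 2)

open Polynomial in
lemma derivative_hermite_succ (n : ℕ) :
    derivative (hermite (n + 1)) = (n + 1) • hermite n := by
  induction n with
  | zero => simp [hermite_one, hermite_zero]
  | succ n ih =>
    rw [hermite_succ (n + 1), ih, derivative_sub, derivative_mul, derivative_X, one_mul,
      derivative_smul, ih, mul_smul_comm, add_sub_assoc, ← smul_sub, ← hermite_succ n, succ_nsmul]
    simp only [nsmul_eq_mul]
    push_cast
    ring

noncomputable def Lmap (d : ℕ) (u : Fin d → ℝ) : (Fin d → ℝ) →L[ℝ] ℝ :=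
  ∑ i, u i • (ContinuousLinearMap.proj i : (Fin d → ℝ) →L[ℝ] ℝ)

lemma Lmap_apply (d : ℕ) (u w : Fin d → ℝ) : Lmap d u w = ∑ i, u i * w i := by
  simp [Lmap]

lemma hasFDerivAt_inner (d : ℕ) (u y : Fin d → ℝ) :
    HasFDerivAt (fun z : Fin d → ℝ => ∑ i, z i * u i) (Lmap d u) y := by
  have h : (fun z : Fin d → ℝ => ∑ i, z i * u i) = fun z => Lmap d u z := by
    funext z; simp [Lmap, mul_comm]
  rw [h]
  exact (Lmap d u).hasFDerivAt

lemma gauss_pos (d : ℕ) (y : Fin d → ℝ) : 0 < gaussDensity d y := by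
  unfold gaussDensity
  positivity

lemma hasFDerivAt_gauss (d : ℕ) (y : Fin d → ℝ) :
    HasFDerivAt (gaussDensity d) ((-gaussDensity d y) • Lmap d y) y := by
  have hq : HasFDerivAt (fun z : Fin d → ℝ => ∑ i, z i ^ 2)
      (∑ i, (y i • (ContinuousLinearMap.proj i : (Fin d → ℝ) →L[ℝ] ℝ)
        + y i • ContinuousLinearMap.proj i)) y := by
    have h : (fun z : Fin d → ℝ => ∑ i, z i ^ 2) = fun z => ∑ i, z i * z i := by
      funext z; simp [sq]
    rw [h]
    refine HasFDerivAt.fun_sum fun i _ => ?_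
    have hp : HasFDerivAt (fun z : Fin d → ℝ => z i)
        (ContinuousLinearMap.proj i : (Fin d → ℝ) →L[ℝ] ℝ) y :=
      (ContinuousLinearMap.proj i : (Fin d → ℝ) →L[ℝ] ℝ).hasFDerivAt
    exact hp.mul hp
  have hfun : gaussDensity d = fun z : Fin d → ℝ =>
      ((2 * Real.pi) ^ ((d : ℝ) / 2))⁻¹ * Real.exp ((-(1:ℝ)/2) * ∑ i, z i ^ 2) := by
    funext z
    unfold gaussDensity
    rw [div_eq_inv_mul]
    congr 1
    ring
  have h2 := ((hq.const_mul (-(1:ℝ)/2)).exp).const_mul (((2 * Real.pi) ^ ((d : ℝ) / 2))⁻¹)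
  rw [← hfun] at h2
  refine h2.congr_fderiv ?_
  ext w
  have hC : (0:ℝ) < (2 * Real.pi) ^ ((d : ℝ) / 2) := by positivity
  simp only [ContinuousLinearMap.smul_apply, ContinuousLinearMap.sum_apply,
    ContinuousLinearMap.add_apply, ContinuousLinearMap.proj_apply, smul_eq_mul, Lmap_apply,
    ContinuousLinearMap.neg_apply]
  unfold gaussDensity
  rw [Finset.sum_add_distrib]
  have harg : (-(1:ℝ)/2 * ∑ i, y i ^ 2) = (-(∑ i, (y i) ^ 2) / 2) := by ring
  rw [harg]
  field_simp
  ring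

lemma contDiff_gauss (d : ℕ) : ContDiff ℝ ⊤ (gaussDensity d) := by
  unfold gaussDensity
  refine ContDiff.div_const ?_ _
  refine ContDiff.exp ?_
  refine ContDiff.div_const ?_ _
  refine ContDiff.neg ?_
  refine ContDiff.sum fun i _ => ?_
  exact ((ContinuousLinearMap.proj i : (Fin d → ℝ) →L[ℝ] ℝ).contDiff).pow 2

open Polynomial in
lemma hasFDerivAt_P (d n : ℕ) (v y : Fin d → ℝ) :
    HasFDerivAt (fun z : Fin d → ℝ => He n (∑ i, z i * v i) * gaussDensity d z)
      (He n (∑ i, y i * v i) • ((-gaussDensity d y) • Lmap d y)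
        + gaussDensity d y • ((aeval (∑ i, y i * v i) (derivative (hermite n)) : ℝ) • Lmap d v))
      y := by
  have h1 : HasFDerivAt (fun z : Fin d → ℝ => He n (∑ i, z i * v i))
      ((aeval (∑ i, y i * v i) (derivative (hermite n)) : ℝ) • Lmap d v) y := by
    have hd : HasDerivAt (fun t : ℝ => He n t)
        (aeval (∑ i, y i * v i) (derivative (hermite n))) (∑ i, y i * v i) := by
      simpa [He] using (Polynomial.hermite n).hasDerivAt_aeval (∑ i, y i * v i)
    exact hd.comp_hasFDerivAt y (hasFDerivAt_inner d v y)
  exact h1.mul (hasFDerivAt_gauss d y)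

lemma fderiv_iterated_apply (d n : ℕ) (f : (Fin d → ℝ) → ℝ) (hf : ContDiff ℝ ⊤ f)
    (y u : Fin d → ℝ) (m : Fin n → (Fin d → ℝ)) :
    (fderiv ℝ (iteratedFDeriv ℝ n f) y u) m
      = fderiv ℝ (fun z => iteratedFDeriv ℝ n f z m) y u := by
  have hdiff : DifferentiableAt ℝ (iteratedFDeriv ℝ n f) y :=
    (hf.differentiable_iteratedFDeriv (by simp : (n : WithTop ℕ∞) < ⊤)).differentiableAt
  have h : (fun z => iteratedFDeriv ℝ n f z m)
      = (ContinuousMultilinearMap.apply ℝ (fun _ : Fin n => (Fin d → ℝ)) ℝ m)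
        ∘ (iteratedFDeriv ℝ n f) := rfl
  rw [h, fderiv_comp y (ContinuousMultilinearMap.apply ℝ _ ℝ m).differentiableAt hdiff,
    ContinuousLinearMap.fderiv]
  rfl

open Polynomial in
lemma iterated_gauss (d : ℕ) (v : Fin d → ℝ) (hv : ∑ i, (v i) ^ 2 = 1) :
    ∀ (n : ℕ) (y : Fin d → ℝ),
      iteratedFDeriv ℝ n (gaussDensity d) y (fun _ => v)
        = (-1 : ℝ) ^ n * (He n (∑ i, y i * v i) * gaussDensity d y) := by
  intro n
  induction n with
  | zero => intro y; simp [He, hermite_zero]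
  | succ n ih =>
    intro y
    have hvv : ∑ i, v i * v i = 1 := by simpa [sq] using hv
    rw [iteratedFDeriv_succ_apply_left]
    have ht : Fin.tail (fun _ : Fin (n+1) => v) = fun _ : Fin n => v := rfl
    rw [ht, fderiv_iterated_apply d n _ (contDiff_gauss d) y v]
    have hfg : (fun z => iteratedFDeriv ℝ n (gaussDensity d) z (fun _ : Fin n => v))
        = fun z => (-1:ℝ)^n * (He n (∑ i, z i * v i) * gaussDensity d z) :=
      funext fun z => ih z
    rw [hfg, ((hasFDerivAt_P d n v y).const_mul ((-1:ℝ)^n)).fderiv]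
    simp only [ContinuousLinearMap.smul_apply, ContinuousLinearMap.add_apply, smul_eq_mul,
      Lmap_apply, hvv]
    have hs : He (n+1) (∑ i, y i * v i)
        = (∑ i, y i * v i) * He n (∑ i, y i * v i)
          - aeval (∑ i, y i * v i) (derivative (hermite n)) := by
      rw [He, hermite_succ]
      simp [He]
    rw [hs]
    ring

open Polynomial in
/-- Efficient tensor power iteration identity: for `x ∈ ℝ^d`, unit `v`, the Hermite tensor
`He_k(x) = ((−1)^k/γ_d(x)) ∇^k γ_d(x)` contracted with `v` in `k−1` slots satisfies
`He_k(x)[v^{⊗(k−1)}] = x · He_{k−1}(x·v) − (k−1) v · He_{k−2}(x·v)`; equivalently, pairing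
with any `w` gives the stated scalar identity. -/
theorem stmt_16 (d k : ℕ) (hk : 1 ≤ k) (x v : Fin d → ℝ) (hv : ∑ i, (v i) ^ 2 = 1)
    (w : Fin d → ℝ) :
    ((-1 : ℝ) ^ k / gaussDensity d x) *
      iteratedFDeriv ℝ k (gaussDensity d) x (fun i : Fin k => if (i : ℕ) = 0 then w else v)
    = (∑ i, x i * w i) * He (k - 1) (∑ i, x i * v i)
      - ((k : ℝ) - 1) * (∑ i, v i * w i) * He (k - 2) (∑ i, x i * v i) := by
  obtain ⟨n, rfl⟩ : ∃ n, k = n + 1 := ⟨k - 1, (Nat.succ_pred_eq_of_pos hk).symm⟩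
  rw [iteratedFDeriv_succ_apply_left]
  have hm0 : (if ((0 : Fin (n+1)) : ℕ) = 0 then w else v) = w := by simp
  have hmt : Fin.tail (fun i : Fin (n+1) => if (i : ℕ) = 0 then w else v)
      = fun _ : Fin n => v := by
    funext i; simp [Fin.tail, Fin.val_succ]
  rw [hm0, hmt, fderiv_iterated_apply d n _ (contDiff_gauss d) x w]
  have hfg : (fun z => iteratedFDeriv ℝ n (gaussDensity d) z (fun _ : Fin n => v))
      = fun z => (-1:ℝ)^n * (He n (∑ i, z i * v i) * gaussDensity d z) :=
    funext fun z => iterated_gauss d v hv n z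
  rw [hfg, ((hasFDerivAt_P d n v x).const_mul ((-1:ℝ)^n)).fderiv]
  simp only [ContinuousLinearMap.smul_apply, ContinuousLinearMap.add_apply, smul_eq_mul,
    Lmap_apply]
  have hder : (aeval (∑ i, x i * v i) (derivative (hermite n)) : ℝ)
      = (n : ℝ) * He (n - 1) (∑ i, x i * v i) := by
    cases n with
    | zero => simp [hermite_zero]
    | succ m =>
      rw [derivative_hermite_succ]
      simp [He, nsmul_eq_mul, Nat.add_sub_cancel]
  rw [hder]
  have hg : gaussDensity d x ≠ 0 := (gauss_pos d x).ne'
  have h1 : (n + 1) - 1 = n := by omega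
  have h2 : (n + 1) - 2 = n - 1 := by omega
  rw [h1, h2]
  have h3 : ((n:ℝ) + 1) - 1 = (n:ℝ) := by ring
  push_cast
  rw [h3]
  field_simp
  ring_nf
  have h4 : ((-1:ℝ)) ^ (n * 2) = 1 := by
    rw [mul_comm, pow_mul]; norm_num
  rw [h4]
  ring
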